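/- Let A be invertible. Then a Hermitian positive definite matrix X_S satisfies X_S ≤ Q − A^H f(X_S)^{-1} A if and only if the matrix Q − X_S is Hermitian positive definite and satisfies Q − X_S ≤ Q − f(A) f(Q − X_S)^{-1} f(A)^H. -/

import Mathlib

open Matrix Filter Topology
open scoped ComplexOrder

noncomputable section

/-- Square complex matrices of size `n`. -/
abbrev Mat (n : ℕ) := Matrix (Fin n) (Fin n) ℂ

/-- An operator `f` on complex `n × n` matrices is *admissible* if it satisfies
(a1) `f (f X) = X`, (a2) additivity, (a3) multiplicativity, and
(a4) `f X` is positive semidefinite whenever `X` is. -/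
def Admissible {n : ℕ} (f : Mat n → Mat n) : Prop :=
  (∀ X, f (f X) = X) ∧
  (∀ X Y, f (X + Y) = f X + f Y) ∧
  (∀ X Y, f (X * Y) = f X * f Y) ∧
  (∀ X, X.PosSemidef → (f X).PosSemidef)

/-! ### Auxiliary lemmas -/

lemma myPosDef_of_posSemidef_isUnit {n : ℕ} {M : Mat n} (h : M.PosSemidef) (hu : IsUnit M) :
    M.PosDef := by
  refine Matrix.PosDef.of_dotProduct_mulVec_pos h.isHermitian (fun x hx => ?_)
  have hd : IsUnit M.det := (Matrix.isUnit_iff_isUnit_det M).mp hu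
  have h0 : star x ⬝ᵥ M *ᵥ x ≠ 0 := by
    intro hc
    have hMx := (h.dotProduct_mulVec_zero_iff x).mp hc
    apply hx
    have h1 : M⁻¹ *ᵥ (M *ᵥ x) = x := by
      rw [Matrix.mulVec_mulVec, Matrix.nonsing_inv_mul _ hd, Matrix.one_mulVec]
    rw [← h1, hMx, Matrix.mulVec_zero]
  exact lt_of_le_of_ne (h.dotProduct_mulVec_nonneg x) (Ne.symm h0)

lemma myPosDef_conj {n : ℕ} {M B : Mat n} (hM : M.PosDef) (hB : IsUnit B) :
    (Bᴴ * M * B).PosDef :=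
  myPosDef_of_posSemidef_isUnit (hM.posSemidef.conjTranspose_mul_mul_same B)
    ((((Matrix.isUnit_conjTranspose _).mpr hB).mul hM.isUnit).mul hB)

lemma myPsd_conj_iff {n : ℕ} {M : Mat n} (B : Mat n) (hB : IsUnit B) :
    (Bᴴ * M * B).PosSemidef ↔ M.PosSemidef := by
  have hd : IsUnit B.det := (Matrix.isUnit_iff_isUnit_det B).mp hB
  have hdH : IsUnit Bᴴ.det := (Matrix.isUnit_iff_isUnit_det Bᴴ).mp ((Matrix.isUnit_conjTranspose _).mpr hB)
  constructor
  · intro h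
    have h2 := h.conjTranspose_mul_mul_same B⁻¹
    have he : (B⁻¹)ᴴ * (Bᴴ * M * B) * B⁻¹ = M := by
      rw [Matrix.conjTranspose_nonsing_inv]
      calc (Bᴴ)⁻¹ * (Bᴴ * M * B) * B⁻¹
          = ((Bᴴ)⁻¹ * (Bᴴ * (M * B))) * B⁻¹ := by rw [Matrix.mul_assoc (Bᴴ) M B]
        _ = (M * B) * B⁻¹ := by rw [Matrix.nonsing_inv_mul_cancel_left _ _ hdH]
        _ = M := Matrix.mul_nonsing_inv_cancel_right _ _ hd
    rwa [he] at h2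
  · intro h
    exact h.conjTranspose_mul_mul_same B

open scoped MatrixOrder in
lemma myExists_sqrt {n : ℕ} {M : Mat n} (hM : M.PosDef) :
    ∃ B : Mat n, Bᴴ = B ∧ IsUnit B.det ∧ B * B = M := by
  refine ⟨CFC.sqrt M, (Matrix.nonneg_iff_posSemidef.mp (CFC.sqrt_nonneg M)).isHermitian, ?_,
    CFC.sqrt_mul_sqrt_self M (Matrix.nonneg_iff_posSemidef.mpr hM.posSemidef)⟩
  have hd : IsUnit M.det := (Matrix.isUnit_iff_isUnit_det M).mp hM.isUnit
  have : IsUnit ((CFC.sqrt M).det * (CFC.sqrt M).det) := by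
    rw [← Matrix.det_mul, CFC.sqrt_mul_sqrt_self M (Matrix.nonneg_iff_posSemidef.mpr hM.posSemidef)]; exact hd
  exact isUnit_of_mul_isUnit_left this

/-- Key Loewner-order fact: inversion is antitone on positive definite matrices. -/
lemma myInv_sub_inv_psd {n : ℕ} {R S : Mat n} (hR : R.PosDef) (hS : S.PosDef)
    (h : (R - S).PosSemidef) : (S⁻¹ - R⁻¹).PosSemidef := by
  obtain ⟨B, hBH, hBd, hBB⟩ := myExists_sqrt hS.inv
  have hBu : IsUnit B := (Matrix.isUnit_iff_isUnit_det B).mpr hBd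
  have hSd : IsUnit S.det := (Matrix.isUnit_iff_isUnit_det S).mp hS.isUnit
  have hC : (B * R * B).PosDef := by
    have := myPosDef_conj hR hBu
    rwa [hBH] at this
  obtain ⟨D, hDH, hDd, hDD⟩ := myExists_sqrt hC.inv
  have hCd : IsUnit (B * R * B).det := (Matrix.isUnit_iff_isUnit_det _).mp hC.isUnit
  -- S = (B * B)⁻¹ and B * S * B = 1
  have hS' : S = B⁻¹ * B⁻¹ := by
    rw [← Matrix.mul_inv_rev, hBB, Matrix.nonsing_inv_nonsing_inv _ hSd]
  have hBSB : B * S * B = 1 := by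
    rw [hS']
    calc B * (B⁻¹ * B⁻¹) * B = (B * B⁻¹) * (B⁻¹ * B) := by simp only [Matrix.mul_assoc]
      _ = 1 := by rw [Matrix.mul_nonsing_inv _ hBd, Matrix.nonsing_inv_mul _ hBd, one_mul]
  have hDCD : D * (B * R * B) * D = 1 := by
    have hC' : B * R * B = D⁻¹ * D⁻¹ := by
      rw [← Matrix.mul_inv_rev, hDD, Matrix.nonsing_inv_nonsing_inv _ hCd]
    rw [hC']
    calc D * (D⁻¹ * D⁻¹) * D = (D * D⁻¹) * (D⁻¹ * D) := by simp only [Matrix.mul_assoc]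
      _ = 1 := by rw [Matrix.mul_nonsing_inv _ hDd, Matrix.nonsing_inv_mul _ hDd, one_mul]
  have hBRBinv : D * D = B⁻¹ * R⁻¹ * B⁻¹ := by
    rw [hDD, Matrix.mul_inv_rev, Matrix.mul_inv_rev]
    rw [Matrix.mul_assoc]
  set E := B * D * B with hE
  have hEH : Eᴴ = B * D * B := by
    rw [hE, Matrix.conjTranspose_mul, Matrix.conjTranspose_mul, hBH, hDH, Matrix.mul_assoc]
  have key : S⁻¹ - R⁻¹ = Eᴴ * (R - S) * E := by
    have h1 : Eᴴ * R * E = S⁻¹ := by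
      rw [hEH, hE]
      calc (B * D * B) * R * (B * D * B)
          = B * (D * (B * R * B) * D) * B := by
            simp only [Matrix.mul_assoc]
        _ = B * B := by rw [hDCD, Matrix.mul_one]
        _ = S⁻¹ := hBB
    have h2 : Eᴴ * S * E = R⁻¹ := by
      rw [hEH, hE]
      calc (B * D * B) * S * (B * D * B)
          = B * D * (B * S * B) * (D * B) := by simp only [Matrix.mul_assoc]
        _ = B * (D * D) * B := by rw [hBSB]; simp only [Matrix.mul_assoc, Matrix.mul_one]
        _ = B * (B⁻¹ * R⁻¹ * B⁻¹) * B := by rw [hBRBinv]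
        _ = (B * B⁻¹) * (R⁻¹ * (B⁻¹ * B)) := by simp only [Matrix.mul_assoc]
        _ = R⁻¹ := by
            rw [Matrix.mul_nonsing_inv _ hBd, Matrix.nonsing_inv_mul _ hBd, one_mul, mul_one]
    rw [Matrix.mul_sub, Matrix.sub_mul, h1, h2]
  rw [key]
  exact h.conjTranspose_mul_mul_same E

lemma myInv_sub_inv_psd_iff {n : ℕ} {R S : Mat n} (hR : R.PosDef) (hS : S.PosDef) :
    (R - S).PosSemidef ↔ (S⁻¹ - R⁻¹).PosSemidef := by
  constructor
  · exact myInv_sub_inv_psd hR hS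
  · intro h
    have := myInv_sub_inv_psd hS.inv hR.inv h
    rwa [Matrix.nonsing_inv_nonsing_inv _ ((Matrix.isUnit_iff_isUnit_det R).mp hR.isUnit),
      Matrix.nonsing_inv_nonsing_inv _ ((Matrix.isUnit_iff_isUnit_det S).mp hS.isUnit)] at this

lemma myHerm_decomp {n : ℕ} {X : Mat n} (hX : X.IsHermitian) :
    ∃ P N : Mat n, P.PosSemidef ∧ N.PosSemidef ∧ X = P - N := by
  classical
  set U : Mat n := (hX.eigenvectorUnitary : Mat n) with hU
  set d : Fin n → ℝ := hX.eigenvalues with hd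
  have h1 : (Matrix.diagonal (fun i => ((max (d i) 0 : ℝ) : ℂ))).PosSemidef :=
    Matrix.PosSemidef.diagonal (fun i => by positivity)
  have h2 : (Matrix.diagonal (fun i => ((max (-d i) 0 : ℝ) : ℂ))).PosSemidef :=
    Matrix.PosSemidef.diagonal (fun i => by positivity)
  refine ⟨U * Matrix.diagonal (fun i => ((max (d i) 0 : ℝ) : ℂ)) * Uᴴ,
          U * Matrix.diagonal (fun i => ((max (-d i) 0 : ℝ) : ℂ)) * Uᴴ,
          h1.mul_mul_conjTranspose_same U, h2.mul_mul_conjTranspose_same U, ?_⟩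
  have hspec := hX.spectral_theorem
  rw [Unitary.conjStarAlgAut_apply, Matrix.star_eq_conjTranspose] at hspec
  calc X = U * Matrix.diagonal (RCLike.ofReal ∘ d) * Uᴴ := hspec
    _ = _ := by
        rw [← Matrix.sub_mul, ← Matrix.mul_sub, Matrix.diagonal_sub]
        have hdiag : (Matrix.diagonal (RCLike.ofReal ∘ d) : Mat n)
            = Matrix.diagonal (fun i => ((max (d i) 0 : ℝ) : ℂ) - ((max (-d i) 0 : ℝ) : ℂ)) := by
          ext i j
          by_cases h : i = j
          · subst h
            simp only [Matrix.diagonal_apply_eq, Function.comp_apply]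
            conv_lhs => rw [← max_zero_sub_max_neg_zero_eq_self (d i)]
            push_cast
            norm_cast
          · simp [Matrix.diagonal_apply_ne _ h]
        rw [hdiag]

/-! ### Properties of admissible operators -/

section AdmissibleFacts

variable {n : ℕ} {f : Mat n → Mat n}

lemma adm_map_zero (hf : Admissible f) : f 0 = 0 := by
  obtain ⟨h1, h2, h3, h4⟩ := hf
  have h := h2 0 0
  rw [add_zero] at h
  exact left_eq_add.mp h

lemma adm_map_sub (hf : Admissible f) (X Y : Mat n) : f (X - Y) = f X - f Y := by
  obtain ⟨h1, h2, h3, h4⟩ := hf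
  have h := h2 (X - Y) Y
  rw [sub_add_cancel] at h
  rw [eq_sub_iff_add_eq, ← h]

lemma adm_map_neg (hf : Admissible f) (X : Mat n) : f (-X) = - f X := by
  have := adm_map_sub hf 0 X
  rwa [zero_sub, adm_map_zero hf, zero_sub] at this

lemma adm_map_one (hf : Admissible f) : f 1 = 1 := by
  obtain ⟨h1, h2, h3, h4⟩ := hf
  have key : ∀ Y, f 1 * Y = Y := by
    intro Y
    conv_lhs => rw [← h1 Y]
    rw [← h3, one_mul, h1]
  have := key 1
  rwa [mul_one] at this

lemma adm_isUnit (hf : Admissible f) {X : Mat n} (hX : IsUnit X) : IsUnit (f X) := by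
  obtain ⟨h1, h2, h3, h4⟩ := hf
  have hd : IsUnit X.det := (Matrix.isUnit_iff_isUnit_det X).mp hX
  have hmul : f X * f X⁻¹ = 1 := by
    rw [← h3, Matrix.mul_nonsing_inv _ hd, adm_map_one ⟨h1, h2, h3, h4⟩]
  have hmul' : f X⁻¹ * f X = 1 := by
    rw [← h3, Matrix.nonsing_inv_mul _ hd, adm_map_one ⟨h1, h2, h3, h4⟩]
  exact ⟨⟨f X, f X⁻¹, hmul, hmul'⟩, rfl⟩

lemma adm_map_inv (hf : Admissible f) {X : Mat n} (hX : IsUnit X) : f X⁻¹ = (f X)⁻¹ := by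
  obtain ⟨h1, h2, h3, h4⟩ := hf
  have hd : IsUnit X.det := (Matrix.isUnit_iff_isUnit_det X).mp hX
  symm
  apply Matrix.inv_eq_right_inv
  rw [← h3, Matrix.mul_nonsing_inv _ hd, adm_map_one ⟨h1, h2, h3, h4⟩]

lemma adm_psd_iff (hf : Admissible f) {X : Mat n} : (f X).PosSemidef ↔ X.PosSemidef := by
  obtain ⟨h1, h2, h3, h4⟩ := hf
  constructor
  · intro h
    have := h4 _ h
    rwa [h1] at this
  · exact h4 X

lemma adm_herm (hf : Admissible f) {X : Mat n} (hX : X.IsHermitian) : (f X).IsHermitian := by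
  obtain ⟨P, N, hP, hN, hPN⟩ := myHerm_decomp hX
  rw [hPN, adm_map_sub hf]
  exact ((adm_psd_iff hf).mpr hP).isHermitian.sub ((adm_psd_iff hf).mpr hN).isHermitian

lemma adm_posDef (hf : Admissible f) {X : Mat n} (hX : X.PosDef) : (f X).PosDef :=
  myPosDef_of_posSemidef_isUnit ((adm_psd_iff hf).mpr hX.posSemidef)
    (adm_isUnit hf hX.isUnit)

lemma adm_exists_scalar_I (hf : Admissible f) :
    ∃ c : ℂ, f (Complex.I • 1) = c • 1 ∧ star c = -c := by
  obtain ⟨h1, h2, h3, h4⟩ := hf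
  rcases Nat.eq_zero_or_pos n with hn | hn
  · subst hn
    refine ⟨Complex.I, ?_, by simp [Complex.star_def, Complex.conj_I]⟩
    ext i j
    exact i.elim0
  · have hcent : ∀ Y : Mat n, f (Complex.I • 1) * Y = Y * f (Complex.I • 1) := by
      intro Y
      calc f (Complex.I • 1) * Y = f (Complex.I • 1) * f (f Y) := by rw [h1]
        _ = f ((Complex.I • 1) * f Y) := (h3 _ _).symm
        _ = f (f Y * (Complex.I • 1)) := by
            rw [smul_mul_assoc, one_mul, mul_smul_comm, mul_one]
        _ = f (f Y) * f (Complex.I • 1) := h3 _ _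
        _ = Y * f (Complex.I • 1) := by rw [h1]
    obtain ⟨c, hc⟩ := Matrix.mem_range_scalar_of_commute_single
      (M := f (Complex.I • 1)) (fun i j _ => (hcent _).symm)
    have hsmul : (Matrix.scalar (Fin n)) c = c • (1 : Mat n) := by
      rw [Matrix.scalar_apply]
      ext i j
      by_cases h : i = j
      · subst h; simp
      · simp [Matrix.diagonal_apply_ne _ h, Matrix.one_apply_ne h]
    have hJ : f (Complex.I • 1) = c • 1 := by rw [← hc, hsmul]
    have hJJ : f (Complex.I • 1) * f (Complex.I • 1) = -1 := by
      rw [← h3]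
      have hii : (Complex.I • 1 : Mat n) * (Complex.I • 1) = -1 := by
        rw [smul_mul_assoc, one_mul, smul_smul, Complex.I_mul_I, neg_smul, one_smul]
      rw [hii]
      have : f (-1 : Mat n) = - f 1 := adm_map_neg ⟨h1, h2, h3, h4⟩ 1
      rw [this, adm_map_one ⟨h1, h2, h3, h4⟩]
    rw [hJ] at hJJ
    have hcc : c * c = -1 := by
      have := congrFun (congrFun hJJ ⟨0, hn⟩) ⟨0, hn⟩
      simpa [Matrix.smul_apply, Matrix.one_apply_eq, smul_smul] using this
    have hfact : (c - Complex.I) * (c + Complex.I) = 0 := by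
      have hI : Complex.I * Complex.I = -1 := Complex.I_mul_I
      ring_nf
      linear_combination hcc - hI
    refine ⟨c, hJ, ?_⟩
    rcases mul_eq_zero.mp hfact with h | h
    · rw [sub_eq_zero.mp h]
      simp [Complex.star_def, Complex.conj_I]
    · rw [eq_neg_of_add_eq_zero_left h]
      simp [Complex.star_def, Complex.conj_I]

lemma adm_map_conjTranspose (hf : Admissible f) (X : Mat n) : f (Xᴴ) = (f X)ᴴ := by
  obtain ⟨c, hJ, hc⟩ := adm_exists_scalar_I hf
  obtain ⟨h1, h2, h3, h4⟩ := hf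
  set M : Mat n := (-Complex.I) • (X - Xᴴ) with hM
  have hMH : M.IsHermitian := by
    rw [Matrix.IsHermitian, hM, Matrix.conjTranspose_smul, Matrix.conjTranspose_sub,
      Matrix.conjTranspose_conjTranspose]
    rw [show star (-Complex.I) = Complex.I by simp [Complex.star_def, Complex.conj_I]]
    rw [neg_smul, ← smul_neg, neg_sub]
  have hHH : (X + Xᴴ).IsHermitian := by
    rw [Matrix.IsHermitian, Matrix.conjTranspose_add, Matrix.conjTranspose_conjTranspose,
      add_comm]
  have hK : X - Xᴴ = (Complex.I • 1) * M := by
    rw [hM, smul_mul_assoc, one_mul, smul_smul]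
    rw [show Complex.I * (-Complex.I) = 1 by rw [mul_neg, Complex.I_mul_I, neg_neg]]
    rw [one_smul]
  have hfM_herm : (f M).IsHermitian := adm_herm ⟨h1, h2, h3, h4⟩ hMH
  have hfH_herm : (f (X + Xᴴ)).IsHermitian := adm_herm ⟨h1, h2, h3, h4⟩ hHH
  have hfK : f (X - Xᴴ) = c • f M := by
    rw [hK, h3, hJ, smul_mul_assoc, one_mul]
  have hfK_anti : (f (X - Xᴴ))ᴴ = - f (X - Xᴴ) := by
    rw [hfK, Matrix.conjTranspose_smul, hfM_herm.eq, hc, neg_smul]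
  have e1 : (f X)ᴴ + (f Xᴴ)ᴴ = f X + f Xᴴ := by
    calc (f X)ᴴ + (f Xᴴ)ᴴ = (f X + f Xᴴ)ᴴ := (Matrix.conjTranspose_add _ _).symm
      _ = (f (X + Xᴴ))ᴴ := by rw [h2]
      _ = f (X + Xᴴ) := hfH_herm.eq
      _ = f X + f Xᴴ := h2 _ _
  have e2 : (f X)ᴴ - (f Xᴴ)ᴴ = f Xᴴ - f X := by
    calc (f X)ᴴ - (f Xᴴ)ᴴ = (f X - f Xᴴ)ᴴ := (Matrix.conjTranspose_sub _ _).symm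
      _ = (f (X - Xᴴ))ᴴ := by rw [adm_map_sub ⟨h1, h2, h3, h4⟩]
      _ = - f (X - Xᴴ) := hfK_anti
      _ = f Xᴴ - f X := by rw [adm_map_sub ⟨h1, h2, h3, h4⟩, neg_sub]
  have hhh : (f Xᴴ)ᴴ + (f Xᴴ)ᴴ = f X + f X := by
    calc (f Xᴴ)ᴴ + (f Xᴴ)ᴴ = ((f X)ᴴ + (f Xᴴ)ᴴ) - ((f X)ᴴ - (f Xᴴ)ᴴ) := by abel
      _ = (f X + f Xᴴ) - (f Xᴴ - f X) := by rw [e1, e2]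
      _ = f X + f X := by abel
  have h2smul : (2 : ℂ) • (f Xᴴ)ᴴ = (2 : ℂ) • f X := by
    rw [two_smul, two_smul]; exact hhh
  have hXX : (f Xᴴ)ᴴ = f X :=
    smul_right_injective (Mat n) (by norm_num : (2 : ℂ) ≠ 0) h2smul
  calc f Xᴴ = ((f Xᴴ)ᴴ)ᴴ := (Matrix.conjTranspose_conjTranspose _).symm
    _ = (f X)ᴴ := by rw [hXX]

end AdmissibleFacts

/-- for invertible `A`, a Hermitian positive definite `X_S` satisfies
`X_S ≤ Q - Aᴴ f(X_S)⁻¹ A` iff `Q - X_S` is positive definite and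
`Q - X_S ≤ Q - f(A) f(Q - X_S)⁻¹ f(A)ᴴ`. -/
theorem stmt_5 {n : ℕ} (f : Mat n → Mat n) (hf : Admissible f)
    (A Q : Mat n) (hA : IsUnit A) (hQ : Q.PosDef)
    (XS : Mat n) (hXS : XS.PosDef) :
    (Q - Aᴴ * (f XS)⁻¹ * A - XS).PosSemidef ↔
      ((Q - XS).PosDef ∧
        ((Q - f A * (f (Q - XS))⁻¹ * (f A)ᴴ) - (Q - XS)).PosSemidef) := by
  have hAd : IsUnit A.det := (Matrix.isUnit_iff_isUnit_det A).mp hA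
  have hAH : IsUnit (Aᴴ) := (Matrix.isUnit_conjTranspose _).mpr hA
  have hAHd : IsUnit (Aᴴ).det := (Matrix.isUnit_iff_isUnit_det _).mp hAH
  have hP : (f XS).PosDef := adm_posDef hf hXS
  have hPd : IsUnit (f XS).det := (Matrix.isUnit_iff_isUnit_det _).mp hP.isUnit
  have hPA : (Aᴴ * (f XS)⁻¹ * A).PosDef := myPosDef_conj hP.inv hA
  have hrw : Q - Aᴴ * (f XS)⁻¹ * A - XS = (Q - XS) - Aᴴ * (f XS)⁻¹ * A :=
    sub_right_comm _ _ _
  have hrw2 : (Q - f A * (f (Q - XS))⁻¹ * (f A)ᴴ) - (Q - XS)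
      = XS - f A * (f (Q - XS))⁻¹ * (f A)ᴴ := by abel
  have key : ∀ _ : (Q - XS).PosDef,
      (((Q - XS) - Aᴴ * (f XS)⁻¹ * A).PosSemidef ↔
        (XS - f A * (f (Q - XS))⁻¹ * (f A)ᴴ).PosSemidef) := by
    intro hY
    have iff1 := myInv_sub_inv_psd_iff hY hPA
    have hinvcalc : (Aᴴ * (f XS)⁻¹ * A)⁻¹ = A⁻¹ * (f XS) * (Aᴴ)⁻¹ := by
      rw [Matrix.mul_inv_rev, Matrix.mul_inv_rev, Matrix.nonsing_inv_nonsing_inv _ hPd,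
        ← Matrix.mul_assoc]
    have hcomp : (Aᴴ)ᴴ * ((Aᴴ * (f XS)⁻¹ * A)⁻¹ - (Q - XS)⁻¹) * Aᴴ
        = f XS - A * (Q - XS)⁻¹ * Aᴴ := by
      rw [Matrix.conjTranspose_conjTranspose, Matrix.mul_sub, Matrix.sub_mul, hinvcalc]
      congr 1
      calc A * (A⁻¹ * (f XS) * (Aᴴ)⁻¹) * Aᴴ
          = A * (A⁻¹ * (f XS * ((Aᴴ)⁻¹ * Aᴴ))) := by simp only [Matrix.mul_assoc]
        _ = f XS := by
            rw [Matrix.nonsing_inv_mul _ hAHd, mul_one,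
              Matrix.mul_nonsing_inv_cancel_left _ _ hAd]
    have iff2 : ((Aᴴ * (f XS)⁻¹ * A)⁻¹ - (Q - XS)⁻¹).PosSemidef ↔
        (f XS - A * (Q - XS)⁻¹ * Aᴴ).PosSemidef := by
      have h := (myPsd_conj_iff (M := (Aᴴ * (f XS)⁻¹ * A)⁻¹ - (Q - XS)⁻¹) (Aᴴ) hAH).symm
      rwa [hcomp] at h
    have hfcomp : f (f XS - A * (Q - XS)⁻¹ * Aᴴ) = XS - f A * (f (Q - XS))⁻¹ * (f A)ᴴ := by
      rw [adm_map_sub hf, hf.1, hf.2.2.1, hf.2.2.1,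
        adm_map_inv hf hY.isUnit, adm_map_conjTranspose hf]
    have iff3 : (f XS - A * (Q - XS)⁻¹ * Aᴴ).PosSemidef ↔
        (XS - f A * (f (Q - XS))⁻¹ * (f A)ᴴ).PosSemidef := by
      constructor
      · intro h
        rw [← hfcomp]
        exact (adm_psd_iff hf).mpr h
      · intro h
        rw [← hfcomp] at h
        exact (adm_psd_iff hf).mp h
    exact iff1.trans (iff2.trans iff3)
  constructor
  · intro h
    rw [hrw] at h
    have hY : (Q - XS).PosDef := by
      have hsum : Q - XS = ((Q - XS) - Aᴴ * (f XS)⁻¹ * A) + Aᴴ * (f XS)⁻¹ * A := by abel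
      rw [hsum]
      exact Matrix.PosDef.posSemidef_add h hPA
    exact ⟨hY, by rw [hrw2]; exact (key hY).mp h⟩
  · rintro ⟨hY, h2⟩
    rw [hrw]
    apply (key hY).mpr
    rwa [hrw2] at h2
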